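/- The function j is Lipschitz continuous on ℝ with Lipschitz constant L_j = 2γ δ_γ / q; that is, |j(t₁) − j(t₂)| ≤ (2γ δ_γ / q)·|t₁ − t₂| for all real t₁, t₂. -/

import Mathlib

set_option linter.unusedSectionVars false

/-- The superposition function `j` from the first-order optimality system of the
regularized `L^q`-quasinorm optimal control problem, with parameters `q ∈ (0,1)`
and `γ > 0`.  Here `δ_γ = q^q γ^(1-q)` and powers are real powers. -/
noncomputable def jfun (q γ t : ℝ) : ℝ :=
  if 1 / γ < |t| then
    (q ^ q * γ ^ (1 - q) - q * (|t| + (q - 1) / γ) ^ (q - 1)) * Real.sign t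
  else 0

section aux
variable {q γ : ℝ} (hq0 : 0 < q) (hq1 : q < 1) (hγ : 0 < γ)

/-- the smooth piece -/
noncomputable def gfun (q γ t : ℝ) : ℝ :=
  q ^ q * γ ^ (1 - q) - q * (t + (q - 1) / γ) ^ (q - 1)

include hq0 hγ in
lemma gfun_base (t : ℝ) (ht : 1 / γ ≤ t) : q / γ ≤ t + (q - 1) / γ := by
  have : q / γ = 1 / γ + (q - 1) / γ := by field_simp; ring
  linarith

include hq0 hq1 hγ in
lemma gfun_key : ∀ t₁ ∈ Set.Ici (1/γ), ∀ t₂ ∈ Set.Ici (1/γ),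
    |gfun q γ t₁ - gfun q γ t₂| ≤ 2 * γ * (q ^ q * γ ^ (1 - q)) / q * |t₁ - t₂| := by
  have hqγ : 0 < q / γ := div_pos hq0 hγ
  have hderiv : ∀ x ∈ Set.Ici (1/γ),
      HasDerivWithinAt (gfun q γ) (q * (1 - q) * (x + (q-1)/γ) ^ (q - 2)) (Set.Ici (1/γ)) x := by
    intro x hx
    have hb : q / γ ≤ x + (q-1)/γ := gfun_base hq0 hγ x hx
    have hne : x + (q-1)/γ ≠ 0 := (hqγ.trans_le hb).ne'
    have h1 : HasDerivAt (fun t : ℝ => t + (q-1)/γ) 1 x := (hasDerivAt_id x).add_const _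
    have h2 : HasDerivAt (fun t : ℝ => (t + (q-1)/γ) ^ (q-1))
        (1 * (q - 1) * (x + (q-1)/γ) ^ (q - 1 - 1)) x := h1.rpow_const (Or.inl hne)
    have h3 : HasDerivAt (gfun q γ)
        (0 - q * (1 * (q - 1) * (x + (q-1)/γ) ^ (q - 1 - 1))) x :=
      (hasDerivAt_const x _).sub (h2.const_mul q)
    have h4 : HasDerivAt (gfun q γ) (q * (1 - q) * (x + (q-1)/γ) ^ (q - 2)) x := by
      convert h3 using 1
      rw [show q - 2 = q - 1 - 1 by ring]; ring
    exact h4.hasDerivWithinAt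
  have hbound : ∀ x ∈ Set.Ici (1/γ),
      ‖q * (1 - q) * (x + (q-1)/γ) ^ (q - 2)‖ ≤ 2 * γ * (q ^ q * γ ^ (1 - q)) / q := by
    intro x hx
    have hb : q / γ ≤ x + (q-1)/γ := gfun_base hq0 hγ x hx
    have hpos : (0:ℝ) < x + (q-1)/γ := hqγ.trans_le hb
    have hnn : (0:ℝ) ≤ q * (1 - q) * (x + (q-1)/γ) ^ (q - 2) :=
      mul_nonneg (mul_nonneg hq0.le (by linarith)) (Real.rpow_nonneg hpos.le _)
    rw [Real.norm_eq_abs, abs_of_nonneg hnn]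
    have h5 : (x + (q-1)/γ) ^ (q - 2) ≤ (q/γ) ^ (q - 2) :=
      Real.rpow_le_rpow_of_nonpos hqγ hb (by linarith)
    have h6 : q * (1 - q) * (x + (q-1)/γ) ^ (q - 2) ≤ q * (1 - q) * (q/γ) ^ (q - 2) := by
      have hn : (0:ℝ) ≤ q * (1 - q) := by nlinarith
      exact mul_le_mul_of_nonneg_left h5 hn
    refine h6.trans ?_
    -- rewrite everything in terms of q^(q-1) and γ^(1-q)
    have hdiv : (q/γ) ^ (q - 2) = q ^ (q-2) * (γ ^ (q-2))⁻¹ := by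
      rw [Real.div_rpow hq0.le hγ.le, div_eq_mul_inv]
    have e1 : q ^ (q:ℝ) = q ^ (q-1) * q := by
      rw [← Real.rpow_add_one hq0.ne']; ring_nf
    have e2 : q ^ (q-1:ℝ) = q ^ (q-2) * q := by
      rw [← Real.rpow_add_one hq0.ne']; ring_nf
    have e3 : γ ^ (q-2:ℝ) * (γ ^ (1-q:ℝ) * γ) = 1 := by
      rw [← Real.rpow_add_one hγ.ne', ← Real.rpow_add hγ,
        show q - 2 + (1 - q + 1) = (0:ℝ) by ring, Real.rpow_zero]
    have hg2 : (0:ℝ) < γ ^ (q-2:ℝ) := Real.rpow_pos_of_pos hγ _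
    have hq1' : (0:ℝ) < q ^ (q-2:ℝ) := Real.rpow_pos_of_pos hq0 _
    have e4 : γ ^ (1-q:ℝ) * γ = (γ ^ (q-2:ℝ))⁻¹ := eq_inv_of_mul_eq_one_right e3
    rw [hdiv, e1, e2, ← e4, le_div_iff₀ hq0]
    have hC : (0:ℝ) < γ ^ (1-q:ℝ) := Real.rpow_pos_of_pos hγ _
    nlinarith [mul_pos (mul_pos hq1' hC) hγ, mul_nonneg (mul_nonneg (mul_nonneg hq1'.le hC.le) hγ.le) hq0.le, sq_nonneg q]
  intro t₁ ht₁ t₂ ht₂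
  have := (convex_Ici (1/γ)).norm_image_sub_le_of_norm_hasDerivWithin_le hderiv hbound ht₂ ht₁
  simpa [Real.norm_eq_abs] using this

include hq0 hq1 hγ in
lemma gfun_inv_zero : gfun q γ (1/γ) = 0 := by
  unfold gfun
  have hqγ : (0:ℝ) < q / γ := div_pos hq0 hγ
  have hb : 1/γ + (q-1)/γ = q/γ := by field_simp; ring
  rw [hb, Real.div_rpow hq0.le hγ.le, div_eq_mul_inv]
  have e3 : γ ^ (q-1:ℝ) * γ ^ (1-q:ℝ) = 1 := by
    rw [← Real.rpow_add hγ, show q - 1 + (1 - q) = (0:ℝ) by ring, Real.rpow_zero]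
  have e4 : γ ^ (1-q:ℝ) = (γ ^ (q-1:ℝ))⁻¹ := eq_inv_of_mul_eq_one_right e3
  have e1 : q ^ (q:ℝ) = q * q ^ (q-1:ℝ) := by
    rw [mul_comm, ← Real.rpow_add_one hq0.ne']; ring_nf
  rw [e4, e1]; ring

include hγ in
lemma jfun_eq_gfun (t : ℝ) (ht : 1/γ ≤ t) (h0 : gfun q γ (1/γ) = 0) :
    jfun q γ t = gfun q γ t := by
  rcases eq_or_lt_of_le ht with h | h
  · rw [jfun, if_neg, ← h, h0]
    rw [← h, abs_of_pos (by positivity)]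
    exact lt_irrefl _
  · have ht0 : 0 < t := lt_trans (by positivity) h
    rw [jfun, if_pos (by rwa [abs_of_pos ht0]), abs_of_pos ht0,
      Real.sign_of_pos ht0, mul_one, gfun]

lemma jfun_neg (t : ℝ) : jfun q γ (-t) = - jfun q γ t := by
  unfold jfun
  rw [abs_neg, Real.sign_neg]
  split_ifs <;> ring

include hγ in
lemma jfun_zero_of (t : ℝ) (ht : |t| ≤ 1/γ) : jfun q γ t = 0 :=
  if_neg (not_lt.mpr ht)

include hq0 hq1 hγ in
lemma jfun_main_aux : ∀ t₁ t₂ : ℝ, t₂ ≤ t₁ →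
    |jfun q γ t₁ - jfun q γ t₂| ≤ 2 * γ * (q ^ q * γ ^ (1 - q)) / q * |t₁ - t₂| := by
  intro t₁ t₂ h12
  set L := 2 * γ * (q ^ q * γ ^ (1 - q)) / q with hLdef
  have hL : 0 ≤ L := by
    have := Real.rpow_pos_of_pos hq0 q
    have := Real.rpow_pos_of_pos hγ (1-q)
    positivity
  have h0 : gfun q γ (1/γ) = 0 := gfun_inv_zero hq0 hq1 hγ
  have key := gfun_key hq0 hq1 hγ
  have hmem : (1/γ : ℝ) ∈ Set.Ici (1/γ) := Set.self_mem_Ici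
  have habs : |t₁ - t₂| = t₁ - t₂ := abs_of_nonneg (by linarith)
  rcases le_or_gt (1/γ) t₂ with h2 | h2
  · -- both in Ici
    rw [jfun_eq_gfun hγ t₁ (le_trans h2 h12) h0, jfun_eq_gfun hγ t₂ h2 h0]
    exact key t₁ (le_trans h2 h12) t₂ h2
  rcases le_or_gt (-(1/γ)) t₂ with hm | hm
  · -- t₂ in middle band
    have hz2 : jfun q γ t₂ = 0 := jfun_zero_of hγ t₂ (abs_le.mpr ⟨hm, h2.le⟩)
    rcases le_or_gt t₁ (1/γ) with h1 | h1
    · have hz1 : jfun q γ t₁ = 0 := jfun_zero_of hγ t₁ (abs_le.mpr ⟨le_trans hm h12, h1⟩)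
      rw [hz1, hz2]
      simpa using mul_nonneg hL (abs_nonneg _)
    · rw [jfun_eq_gfun hγ t₁ h1.le h0, hz2, sub_zero, ← sub_zero (gfun q γ t₁), ← h0]
      refine le_trans (key t₁ h1.le (1/γ) hmem) ?_
      rw [habs, abs_of_nonneg (by linarith)]
      have : t₁ - 1/γ ≤ t₁ - t₂ := by linarith
      exact mul_le_mul_of_nonneg_left this hL
  · -- t₂ < -(1/γ)
    have hz2 : jfun q γ t₂ = - gfun q γ (-t₂) := by
      rw [← jfun_eq_gfun hγ (-t₂) (by linarith) h0, ← jfun_neg, neg_neg]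
    rcases lt_or_ge t₁ (-(1/γ)) with h1 | h1
    · have hz1 : jfun q γ t₁ = - gfun q γ (-t₁) := by
        rw [← jfun_eq_gfun hγ (-t₁) (by linarith) h0, ← jfun_neg, neg_neg]
      rw [hz1, hz2]
      have : -gfun q γ (-t₁) - -gfun q γ (-t₂) = -(gfun q γ (-t₁) - gfun q γ (-t₂)) := by ring
      rw [this, abs_neg]
      refine le_trans (key (-t₁) (Set.mem_Ici.mpr (by linarith)) (-t₂) (Set.mem_Ici.mpr (by linarith))) ?_
      rw [habs, show |-t₁ - -t₂| = |t₁ - t₂| by rw [← abs_neg]; ring_nf, habs]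
    rcases le_or_gt t₁ (1/γ) with h1' | h1'
    · have hz1 : jfun q γ t₁ = 0 := jfun_zero_of hγ t₁ (abs_le.mpr ⟨h1, h1'⟩)
      rw [hz1, hz2, zero_sub, neg_neg, ← sub_zero (gfun q γ (-t₂)), ← h0]
      refine le_trans (key (-t₂) (Set.mem_Ici.mpr (by linarith)) (1/γ) hmem) ?_
      rw [habs, abs_of_nonneg (by linarith)]
      have : -t₂ - 1/γ ≤ t₁ - t₂ := by linarith
      exact mul_le_mul_of_nonneg_left this hL
    · rw [jfun_eq_gfun hγ t₁ h1'.le h0, hz2, sub_neg_eq_add]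
      have tri : |gfun q γ t₁ + gfun q γ (-t₂)| ≤
          |gfun q γ t₁ - gfun q γ (1/γ)| + |gfun q γ (-t₂) - gfun q γ (1/γ)| := by
        rw [h0, sub_zero, sub_zero]
        exact abs_add_le _ _
      refine le_trans tri ?_
      have k1 := key t₁ h1'.le (1/γ) hmem
      have k2 := key (-t₂) (Set.mem_Ici.mpr (by linarith)) (1/γ) hmem
      rw [abs_of_nonneg (by linarith : (0:ℝ) ≤ t₁ - 1/γ)] at k1
      rw [abs_of_nonneg (by linarith : (0:ℝ) ≤ -t₂ - 1/γ)] at k2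
      rw [habs]
      have hγi : 0 < 1/γ := by positivity
      nlinarith [mul_nonneg hL hγi.le]

end aux

/-- Lemma 2.2(b): `j` is Lipschitz continuous with Lipschitz constant
`L_j = 2 γ δ_γ / q`, where `δ_γ = q^q γ^(1-q)`. -/
theorem jfun_lipschitz (q γ : ℝ) (hq0 : 0 < q) (hq1 : q < 1) (hγ : 0 < γ) :
    ∀ t₁ t₂ : ℝ,
      |jfun q γ t₁ - jfun q γ t₂| ≤ 2 * γ * (q ^ q * γ ^ (1 - q)) / q * |t₁ - t₂| := by
  intro t₁ t₂
  rcases le_total t₂ t₁ with h | h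
  · exact jfun_main_aux hq0 hq1 hγ t₁ t₂ h
  · rw [abs_sub_comm, abs_sub_comm t₁]
    exact jfun_main_aux hq0 hq1 hγ t₂ t₁ h
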